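/- In B_3, for every integer i and every natural number n, τ_i * δ^n = δ^n * τ_{i+n}, where δ = ba and τ is determined by the index mod 3 (τ_i = a, b, x for i ≡ 1, 2, 0 mod 3, with x = a⁻¹ba). -/
import Mathlib


def B3rels : Set (FreeGroup (Fin 2)) :=
  {FreeGroup.of 0 * FreeGroup.of 1 * FreeGroup.of 0 *
    (FreeGroup.of 1 * FreeGroup.of 0 * FreeGroup.of 1)⁻¹}

/-- The braid group on 3 strands, presented as ⟨a, b | aba = bab⟩. -/
abbrev B3 := PresentedGroup B3rels

def a : B3 := PresentedGroup.of 0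
def b : B3 := PresentedGroup.of 1
def x : B3 := a⁻¹ * b * a
def δ : B3 := b * a
def Δ : B3 := a * b * a

/-- τ_i = a, b, x according to i ≡ 1, 2, 0 (mod 3). -/
def τ (i : ℤ) : B3 := if i % 3 = 1 then a else if i % 3 = 2 then b else x


lemma braid_rel : a * b * a = b * a * b := by
  have h : (PresentedGroup.mk B3rels)
      (FreeGroup.of 0 * FreeGroup.of 1 * FreeGroup.of 0 *
        (FreeGroup.of 1 * FreeGroup.of 0 * FreeGroup.of 1)⁻¹) = 1 := by
    apply (QuotientGroup.eq_one_iff _).2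
    exact Subgroup.subset_normalClosure rfl
  simp only [map_mul, map_inv] at h
  have : a * b * a * (b * a * b)⁻¹ = 1 := h
  group at this ⊢
  exact mul_inv_eq_one.mp this

lemma tau_step : ∀ i : ℤ, τ i * δ = δ * τ (i + 1) := by
  intro i
  have h3 : i % 3 = 0 ∨ i % 3 = 1 ∨ i % 3 = 2 := by omega
  rcases h3 with h | h | h
  · have h' : (i + 1) % 3 = 1 := by omega
    simp only [τ, h, h', δ, x]
    norm_num
    calc a⁻¹ * b * a * (b * a) = a⁻¹ * (b * a * b) * a := by group
      _ = a⁻¹ * (a * b * a) * a := by rw [braid_rel]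
      _ = b * a * a := by group
  · have h' : (i + 1) % 3 = 2 := by omega
    simp only [τ, h, h', δ]
    norm_num
    rw [← mul_assoc]; exact braid_rel
  · have h' : (i + 1) % 3 = 0 := by omega
    simp only [τ, h, h', δ, x]
    norm_num
    group

theorem tau_mul_delta_pow : ∀ (i : ℤ) (n : ℕ), τ i * δ ^ n = δ ^ n * τ (i + n) := by
  intro i n
  induction n generalizing i with
  | zero => simp
  | succ n ih =>
    rw [pow_succ, ← mul_assoc, ih i, mul_assoc, tau_step, ← mul_assoc, ← pow_succ]
    congr 1
    push_cast
    ring_nf
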